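/- Let n ≥ 1 and let C, H_SB, H_0, H_1, …, H_r be n×n complex matrices with H_SB, H_0, …, H_r skew-Hermitian (Hᴴ = −H). Suppose S is a ℂ-linear subspace of the n×n complex matrices such that (i) C ∈ S, (ii) S is closed under X ↦ [H_i, X] for every i ∈ {0,…,r}, and (iii) [X, H_SB] = 0 for every X ∈ S. Then for every finite sequence of durations t_1,…,t_m ∈ ℝ and control coefficients u_k ∈ ℝ^{r+1} (k = 1,…,m), setting A_k = Σ_{i=0}^r u_{k,i} H_i, the propagators P = exp(t_m(A_m + H_SB))···exp(t_1(A_1 + H_SB)) and Q = exp(t_m A_m)···exp(t_1 A_1) satisfy ⟨Pξ, C Pξ⟩ = ⟨Qξ, C Qξ⟩ for every ξ ∈ ℂⁿ. That is, the output y = ⟨ξ(t), C ξ(t)⟩ of the bilinear quantum control system is completely decoupled from the interaction Hamiltonian H_SB under arbitrary piecewise-constant controls. -/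

import Mathlib

open Matrix NormedSpace

namespace OLD

variable {n : ℕ}

local notation "M" => Matrix (Fin n) (Fin n) ℂ

noncomputable abbrev U0 : UniformSpace M :=
  UniformSpace.replaceTopology (Matrix.instUniformSpace (Fin n) (Fin n) ℂ) rfl

theorem hU : @uniformity M U0 =
    @uniformity M (Matrix.linftyOpNormedRing : NormedRing M).toMetricSpace.toUniformSpace := rfl

noncomputable abbrev nr : NormedRing M :=
  { (Matrix.linftyOpNormedRing : NormedRing M) with
    toMetricSpace :=
      @MetricSpace.replaceUniformity _ U0 (Matrix.linftyOpNormedRing : NormedRing M).toMetricSpace hU }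

attribute [local instance] nr

noncomputable abbrev na : NormedAlgebra ℂ M :=
  @NormedAlgebra.mk ℂ M _ nr.toSeminormedRing Matrix.instAlgebra (fun r x =>
      (Matrix.linftyOpNormedAlgebra (R := ℂ) (α := ℂ) (n := Fin n)).norm_smul_le r x)

attribute [local instance] na

noncomputable abbrev ns : NormedSpace ℂ M :=
  @NormedSpace.mk ℂ M _ _ (Matrix.module) (fun r x => na.norm_smul_le r x)

attribute [local instance] ns

instance cM : @CompleteSpace M (@PseudoMetricSpace.toUniformSpace M nr.toPseudoMetricSpace) :=
  FiniteDimensional.complete ℂ M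

noncomputable def Lc (N : M) : M →L[ℂ] M :=
  LinearMap.toContinuousLinearMap (LinearMap.mulLeft ℂ N)

noncomputable def Rc (N : M) : M →L[ℂ] M :=
  LinearMap.toContinuousLinearMap (LinearMap.mulRight ℂ N)

@[simp] lemma Lc_apply (N X : M) : Lc N X = N * X := rfl
@[simp] lemma Rc_apply (N X : M) : Rc N X = X * N := rfl

lemma exp_apply (f : M →L[ℂ] M) (X : M) :
    NormedSpace.exp f X = ∑' (k : ℕ), (Nat.factorial k : ℂ)⁻¹ • (f ^ k) X := by
  simp only [exp_eq_tsum ℂ]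
  simpa using ((ContinuousLinearMap.apply ℂ M X).map_tsum (expSeries_summable' (𝕂 := ℂ) f))

lemma Lc_pow (N : M) (k : ℕ) (X : M) : ((Lc N) ^ k) X = N ^ k * X := by
  induction k generalizing X with
  | zero => simp
  | succ k ih =>
      rw [pow_succ, ContinuousLinearMap.mul_apply, Lc_apply, ih, pow_succ, mul_assoc]

lemma Rc_pow (N : M) (k : ℕ) (X : M) : ((Rc N) ^ k) X = X * N ^ k := by
  induction k generalizing X with
  | zero => simp
  | succ k ih =>
      rw [pow_succ, ContinuousLinearMap.mul_apply, Rc_apply, ih, pow_succ', ← mul_assoc]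

lemma expL (N X : M) : NormedSpace.exp (Lc N) X = NormedSpace.exp N * X := by
  rw [exp_apply]
  simp only [Lc_pow, exp_eq_tsum ℂ]
  have h := (((ContinuousLinearMap.mul ℂ M).flip X).map_tsum (expSeries_summable' (𝕂 := ℂ) N))
  simpa [smul_mul_assoc] using h.symm

lemma expR (N X : M) : NormedSpace.exp (Rc N) X = X * NormedSpace.exp N := by
  rw [exp_apply]
  simp only [Rc_pow, exp_eq_tsum ℂ]
  have h := (((ContinuousLinearMap.mul ℂ M) X).map_tsum (expSeries_summable' (𝕂 := ℂ) N))
  simpa [mul_smul_comm] using h.symm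

lemma conj_exp (N₁ N₂ X : M) :
    NormedSpace.exp (Lc N₁ + Rc N₂) X = NormedSpace.exp N₁ * X * NormedSpace.exp N₂ := by
  have hcomm : Commute (Lc N₁) (Rc N₂) := by
    ext Y
    simp [ContinuousLinearMap.mul_apply, mul_assoc]
  let +nondep : NormedAlgebra ℚ (M →L[ℂ] M) := .restrictScalars ℚ ℂ _
  have h2 := NormedSpace.exp_add_of_commute (𝔸 := Matrix (Fin n) (Fin n) ℂ →L[ℂ] Matrix (Fin n) (Fin n) ℂ) hcomm
  rw [h2]
  rw [ContinuousLinearMap.mul_apply, expR, expL, mul_assoc]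


lemma exp_conj_eq_mem (S : Submodule ℂ M) (B B' : M)
    (hagree : ∀ X ∈ S, X * B - B * X = X * B' - B' * X)
    (hinv : ∀ X ∈ S, X * B' - B' * X ∈ S) (X : M) (hX : X ∈ S) :
    NormedSpace.exp (-B) * X * NormedSpace.exp B = NormedSpace.exp (-B') * X * NormedSpace.exp B' ∧
      NormedSpace.exp (-B') * X * NormedSpace.exp B' ∈ S := by
  set D : M →L[ℂ] M := Lc (-B) + Rc B with hDdef
  set D' : M →L[ℂ] M := Lc (-B') + Rc B' with hD'def
  have hD'mem : ∀ Y ∈ S, D' Y ∈ S := by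
    intro Y hY
    have : D' Y = Y * B' - B' * Y := by
      simp [hD'def, neg_mul, sub_eq_neg_add]
    rw [this]
    exact hinv Y hY
  have hDeq : ∀ Y ∈ S, D Y = D' Y := by
    intro Y hY
    have h1 : D Y = Y * B - B * Y := by simp [hDdef, neg_mul, sub_eq_neg_add]
    have h2 : D' Y = Y * B' - B' * Y := by simp [hD'def, neg_mul, sub_eq_neg_add]
    rw [h1, h2, hagree Y hY]
  have hpow : ∀ k : ℕ, (D ^ k) X = (D' ^ k) X ∧ (D' ^ k) X ∈ S := by
    intro k
    induction k with
    | zero => simpa using hX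
    | succ k ih =>
        obtain ⟨h1, h2⟩ := ih
        constructor
        · rw [pow_succ', pow_succ', ContinuousLinearMap.mul_apply,
            ContinuousLinearMap.mul_apply, h1, hDeq _ h2]
        · rw [pow_succ', ContinuousLinearMap.mul_apply]
          exact hD'mem _ h2
  have hsum : Summable fun k : ℕ => (Nat.factorial k : ℂ)⁻¹ • (D' ^ k) X := by
    have h := (expSeries_summable' (𝕂 := ℂ) D').map
      (ContinuousLinearMap.apply ℂ M X : (M →L[ℂ] M) →+ M)
      (ContinuousLinearMap.apply ℂ M X).continuous
    exact h
  have hmem : NormedSpace.exp D' X ∈ S := by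
    rw [exp_apply]
    have hclosed : IsClosed (S : Set M) := Submodule.closed_of_finiteDimensional S
    refine hclosed.mem_of_tendsto hsum.hasSum.tendsto_sum_nat
      (Filter.Eventually.of_forall fun N => ?_)
    exact Submodule.sum_mem S fun k _ => S.smul_mem _ (hpow k).2
  have heq : NormedSpace.exp D X = NormedSpace.exp D' X := by
    rw [exp_apply, exp_apply]
    exact tsum_congr fun k => by rw [(hpow k).1]
  refine ⟨?_, ?_⟩
  · rw [← conj_exp, ← conj_exp]
    exact heq
  · rw [← conj_exp]
    exact hmem

lemma sum_skew (H : Fin (r+1) → M) (hH_skew : ∀ i, (H i)ᴴ = -(H i)) (u : Fin (r+1) → ℝ) :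
    (∑ i, (u i : ℂ) • H i)ᴴ = -(∑ i, (u i : ℂ) • H i) := by
  rw [Matrix.conjTranspose_sum]
  simp [Matrix.conjTranspose_smul, hH_skew, Complex.star_def, Complex.conj_ofReal]

lemma step (HSB : M) (H : Fin (r+1) → M) (hHSB_skew : HSBᴴ = -HSB)
    (hH_skew : ∀ i, (H i)ᴴ = -(H i)) (S : Submodule ℂ M)
    (hcl : ∀ i, ∀ X ∈ S, H i * X - X * H i ∈ S)
    (hcomm : ∀ X ∈ S, X * HSB - HSB * X = 0)
    (c : ℝ) (u : Fin (r+1) → ℝ) (X : M) (hX : X ∈ S) :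
    (NormedSpace.exp ((c:ℂ) • (∑ i, (u i : ℂ) • H i + HSB)))ᴴ * X *
        NormedSpace.exp ((c:ℂ) • (∑ i, (u i : ℂ) • H i + HSB)) =
      (NormedSpace.exp ((c:ℂ) • ∑ i, (u i : ℂ) • H i))ᴴ * X *
        NormedSpace.exp ((c:ℂ) • ∑ i, (u i : ℂ) • H i) ∧
    (NormedSpace.exp ((c:ℂ) • ∑ i, (u i : ℂ) • H i))ᴴ * X *
        NormedSpace.exp ((c:ℂ) • ∑ i, (u i : ℂ) • H i) ∈ S := by
  set A : M := ∑ i, (u i : ℂ) • H i with hA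
  have hA_skew : Aᴴ = -A := sum_skew H hH_skew u
  set B : M := (c:ℂ) • (A + HSB) with hB
  set B' : M := (c:ℂ) • A with hB'
  have hB_skew : Bᴴ = -B := by
    rw [hB, Matrix.conjTranspose_smul, Matrix.conjTranspose_add, hA_skew, hHSB_skew]
    simp [Complex.star_def, Complex.conj_ofReal, smul_add]
    abel
  have hB'_skew : B'ᴴ = -B' := by
    rw [hB', Matrix.conjTranspose_smul, hA_skew]
    simp [Complex.star_def, Complex.conj_ofReal]
  have hexpB : (NormedSpace.exp B)ᴴ = NormedSpace.exp (-B) := by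
    rw [← Matrix.exp_conjTranspose, hB_skew]
  have hexpB' : (NormedSpace.exp B')ᴴ = NormedSpace.exp (-B') := by
    rw [← Matrix.exp_conjTranspose, hB'_skew]
  have hAmem : ∀ Y ∈ S, Y * A - A * Y ∈ S := by
    intro Y hY
    have : Y * A - A * Y = ∑ i, (u i : ℂ) • (Y * H i - H i * Y) := by
      rw [hA, Finset.mul_sum, Finset.sum_mul, ← Finset.sum_sub_distrib]
      congr 1
      ext i
      rw [mul_smul_comm, smul_mul_assoc, smul_sub]
    rw [this]
    refine Submodule.sum_mem S fun i _ => S.smul_mem _ ?_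
    have := hcl i Y hY
    simpa using S.neg_mem this
  have hagree : ∀ Y ∈ S, Y * B - B * Y = Y * B' - B' * Y := by
    intro Y hY
    rw [hB, hB']
    rw [mul_smul_comm, smul_mul_assoc, mul_smul_comm, smul_mul_assoc, ← smul_sub, ← smul_sub]
    congr 1
    rw [mul_add, add_mul]
    have h0 := hcomm Y hY
    have : Y * HSB = HSB * Y := by linear_combination (norm := abel) h0
    rw [this]
    abel
  have hinv : ∀ Y ∈ S, Y * B' - B' * Y ∈ S := by
    intro Y hY
    rw [hB', mul_smul_comm, smul_mul_assoc, ← smul_sub]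
    exact S.smul_mem _ (hAmem Y hY)
  obtain ⟨h1, h2⟩ := exp_conj_eq_mem S B B' hagree hinv X hX
  rw [hexpB, hexpB']
  exact ⟨h1, h2⟩

lemma main (HSB : M) (H : Fin (r+1) → M) (hHSB_skew : HSBᴴ = -HSB)
    (hH_skew : ∀ i, (H i)ᴴ = -(H i)) (S : Submodule ℂ M)
    (hcl : ∀ i, ∀ X ∈ S, H i * X - X * H i ∈ S)
    (hcomm : ∀ X ∈ S, X * HSB - HSB * X = 0) :
    ∀ (m : ℕ) (t : Fin m → ℝ) (u : Fin m → Fin (r + 1) → ℝ) (X : M), X ∈ S →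
      (((List.ofFn fun k : Fin m =>
          NormedSpace.exp ((t k : ℂ) • (∑ i, (u k i : ℂ) • H i + HSB))).reverse).prod)ᴴ * X *
        (((List.ofFn fun k : Fin m =>
          NormedSpace.exp ((t k : ℂ) • (∑ i, (u k i : ℂ) • H i + HSB))).reverse).prod) =
      (((List.ofFn fun k : Fin m =>
          NormedSpace.exp ((t k : ℂ) • ∑ i, (u k i : ℂ) • H i)).reverse).prod)ᴴ * X *
        (((List.ofFn fun k : Fin m =>
          NormedSpace.exp ((t k : ℂ) • ∑ i, (u k i : ℂ) • H i)).reverse).prod) ∧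
      (((List.ofFn fun k : Fin m =>
          NormedSpace.exp ((t k : ℂ) • ∑ i, (u k i : ℂ) • H i)).reverse).prod)ᴴ * X *
        (((List.ofFn fun k : Fin m =>
          NormedSpace.exp ((t k : ℂ) • ∑ i, (u k i : ℂ) • H i)).reverse).prod) ∈ S := by
  intro m
  induction m with
  | zero =>
      intro t u X hX
      simpa using hX
  | succ m ih =>
      intro t u X hX
      simp only [List.ofFn_succ, List.reverse_cons, List.prod_append, List.prod_cons,
        List.prod_nil, mul_one]
      have hconj : ∀ (Pt E Y : M), (Pt * E)ᴴ * Y * (Pt * E) = Eᴴ * (Ptᴴ * Y * Pt) * E := by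
        intro Pt E Y
        rw [Matrix.conjTranspose_mul]
        simp [mul_assoc]
      rw [hconj, hconj]
      obtain ⟨ih1, ih2⟩ := ih (fun k => t k.succ) (fun k => u k.succ) X hX
      rw [ih1]
      exact step HSB H hHSB_skew hH_skew S hcl hcomm (t 0) (u 0) _ ih2

end OLD

/-- Open-loop decoupling (Theorem 1, Case I, finite-dimensional time-independent form):
if a ℂ-linear subspace `S` of matrices contains `C`, is closed under commutation with every
control/drift Hamiltonian `H i`, and every element of `S` commutes with the interaction
Hamiltonian `H_SB`, then the output `y = ⟨ξ(t), C ξ(t)⟩` is unchanged by removing `H_SB`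
from the dynamics, for arbitrary piecewise-constant controls. -/
theorem open_loop_decoupling
    (n r : ℕ) (hn : 1 ≤ n)
    (C HSB : Matrix (Fin n) (Fin n) ℂ) (H : Fin (r + 1) → Matrix (Fin n) (Fin n) ℂ)
    (hHSB_skew : HSBᴴ = -HSB) (hH_skew : ∀ i, (H i)ᴴ = -(H i))
    (S : Submodule ℂ (Matrix (Fin n) (Fin n) ℂ))
    (hC : C ∈ S)
    (hclosed : ∀ i : Fin (r + 1), ∀ X ∈ S, H i * X - X * H i ∈ S)
    (hcomm : ∀ X ∈ S, X * HSB - HSB * X = 0)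
    (m : ℕ) (t : Fin m → ℝ) (u : Fin m → Fin (r + 1) → ℝ) :
    ∀ ξ : Fin n → ℂ,
      let A : Fin m → Matrix (Fin n) (Fin n) ℂ := fun k => ∑ i, (u k i : ℂ) • H i
      let P : Matrix (Fin n) (Fin n) ℂ :=
        ((List.ofFn fun k : Fin m => NormedSpace.exp ((t k : ℂ) • (A k + HSB))).reverse).prod
      let Q : Matrix (Fin n) (Fin n) ℂ :=
        ((List.ofFn fun k : Fin m => NormedSpace.exp ((t k : ℂ) • A k)).reverse).prod
      star (P.mulVec ξ) ⬝ᵥ C.mulVec (P.mulVec ξ) =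
        star (Q.mulVec ξ) ⬝ᵥ C.mulVec (Q.mulVec ξ) := by
  intro ξ A P Q
  have hdot : ∀ R : Matrix (Fin n) (Fin n) ℂ,
      star (R.mulVec ξ) ⬝ᵥ C.mulVec (R.mulVec ξ) = star ξ ⬝ᵥ (Rᴴ * C * R).mulVec ξ := by
    intro R
    simp only [Matrix.star_mulVec, Matrix.mulVec_mulVec, Matrix.dotProduct_mulVec,
      Matrix.vecMul_vecMul, mul_assoc]
  have key : Pᴴ * C * P = Qᴴ * C * Q :=
    (OLD.main HSB H hHSB_skew hH_skew S hclosed hcomm m t u C hC).1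
  rw [hdot P, hdot Q, key]
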